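/- Let p be prime, ξ a primitive p-th root of unity, K ⊆ ℤ_p a subset of size r, and T₁, ..., T_m pairwise disjoint nonempty subsets of ℤ_p with |T₁ ∪ ... ∪ T_m| ≤ r. Then the vectors v_j = (Σ_{g∈T_j} ξ^{kg})_{k∈K} ∈ ℂ^r for 1 ≤ j ≤ m are linearly independent. -/

import Mathlib

open Finset

open Polynomial




/-- Frenkel's lemma: a polynomial over `ZMod p` of degree `< p` with at most `n`
nonzero terms divisible by `(X-1)^n` is zero. -/
theorem frenkel (p : ℕ) [hp : Fact p.Prime] :
    ∀ (n : ℕ) (f : Polynomial (ZMod p)), f.natDegree < p → f.support.card ≤ n →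
      (X - 1) ^ n ∣ f → f = 0 := by
  intro n
  induction n with
  | zero =>
    intro f _ hcard _
    simpa [Finset.card_eq_zero, Polynomial.support_eq_empty] using Nat.le_zero.mp hcard
  | succ n IH =>
    intro f hdeg hcard hdvd
    by_contra hf
    obtain ⟨a, ha⟩ := Polynomial.nonempty_support_iff.mpr hf
    set g : Polynomial (ZMod p) := X * derivative f - C (a : ZMod p) * f with hg
    have hcoeff : ∀ b : ℕ, g.coeff b = ((b : ZMod p) - (a : ZMod p)) * f.coeff b := by
      intro b
      cases b with
      | zero => simp [hg, sub_mul, coeff_derivative]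
      | succ m =>
        simp only [hg, coeff_sub, coeff_X_mul, coeff_derivative, coeff_C_mul]
        push_cast
        ring
    have hsupp : g.support ⊆ f.support \ {a} := by
      intro b hb
      rw [Polynomial.mem_support_iff] at hb
      rw [hcoeff b] at hb
      rw [Finset.mem_sdiff, Finset.mem_singleton]
      constructor
      · rw [Polynomial.mem_support_iff]
        intro h0; exact hb (by rw [h0, mul_zero])
      · rintro rfl; exact hb (by rw [sub_self, zero_mul])
    have hcard' : g.support.card ≤ n := by
      calc g.support.card ≤ (f.support \ {a}).card := Finset.card_le_card hsupp
        _ = f.support.card - 1 := by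
            rw [Finset.card_sdiff_of_subset (Finset.singleton_subset_iff.mpr ha), Finset.card_singleton]
        _ ≤ n := by omega
    have hdeg' : g.natDegree < p := by
      rcases eq_or_ne g 0 with h0 | h0
      · rw [h0, natDegree_zero]; exact hp.out.pos
      · have := hsupp (Polynomial.natDegree_mem_support_of_nonzero h0)
        rw [Finset.mem_sdiff] at this
        exact lt_of_le_of_lt (Polynomial.le_natDegree_of_mem_supp _ this.1) hdeg
    have hdvd' : (X - 1) ^ n ∣ g := by
      obtain ⟨h, hh⟩ := hdvd
      refine ⟨X * (C ((n + 1 : ℕ) : ZMod p) * h + (X - 1) * derivative h) - C (a : ZMod p) * ((X - 1) * h), ?_⟩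
      rw [hg, hh]
      rw [derivative_mul, derivative_pow, derivative_sub, derivative_X, derivative_one, Nat.succ_sub_one]
      ring
    have hg0 : g = 0 := IH g hdeg' hcard' hdvd'
    -- all support is {a}
    have hsingle : f.support ⊆ {a} := by
      intro b hb
      rw [Finset.mem_singleton]
      by_contra hba
      have hb' := Polynomial.mem_support_iff.mp hb
      have : g.coeff b = 0 := by rw [hg0]; simp
      rw [hcoeff b] at this
      rcases mul_eq_zero.mp this with h1 | h2
      · have hbp : b < p := lt_of_le_of_lt (Polynomial.le_natDegree_of_mem_supp _ hb) hdeg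
        have hap : a < p := lt_of_le_of_lt (Polynomial.le_natDegree_of_mem_supp _ ha) hdeg
        have : (b : ZMod p) = (a : ZMod p) := sub_eq_zero.mp h1
        have : b = a := by
          have := congrArg ZMod.val this
          rwa [ZMod.val_cast_of_lt hbp, ZMod.val_cast_of_lt hap] at this
        exact hba this
      · exact hb' h2
    have heval : f.eval 1 = 0 := by
      obtain ⟨q, hq⟩ := (dvd_pow_self (X - 1 : Polynomial (ZMod p)) (Nat.succ_ne_zero n)).trans hdvd
      rw [hq]; simp
    have : f.support = {a} := Finset.Subset.antisymm hsingle (Finset.singleton_subset_iff.mpr ha)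
    rw [Polynomial.eval_eq_sum, Polynomial.sum_def, this, Finset.sum_singleton, one_pow,
      mul_one] at heval
    exact Polynomial.mem_support_iff.mp ha heval


theorem prod_X_sub_C_dvd_of_roots {S : Type*} [CommRing S] [IsDomain S]
    (s : Finset S) (f : S[X]) (h : ∀ x ∈ s, f.IsRoot x) :
    (∏ x ∈ s, (X - C x)) ∣ f := by
  induction s using Finset.cons_induction generalizing f with
  | empty => simp
  | cons a s ha IH =>
    obtain ⟨q, hq⟩ := (Polynomial.dvd_iff_isRoot).mpr (h a (Finset.mem_cons_self a s))
    have hroots : ∀ x ∈ s, q.IsRoot x := by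
      intro x hx
      have hfx : f.IsRoot x := h x (Finset.mem_cons.mpr (Or.inr hx))
      rw [Polynomial.IsRoot, hq] at hfx
      simp only [Polynomial.eval_mul, Polynomial.eval_sub, Polynomial.eval_X,
        Polynomial.eval_C] at hfx
      rcases mul_eq_zero.mp hfx with h1 | h2
      · exact absurd ((sub_eq_zero.mp h1) ▸ hx) ha
      · exact h2
    obtain ⟨w, hw⟩ := IH q hroots
    exact ⟨w, by rw [hq, hw, Finset.prod_cons]; ring⟩


section Cheb

variable (p : ℕ) [hp : Fact p.Prime]

noncomputable def zet : AdjoinRoot (cyclotomic p ℤ) := AdjoinRoot.root _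

instance RisDomain : IsDomain (AdjoinRoot (cyclotomic p ℤ)) := by
  apply AdjoinRoot.isDomain_of_prime
  exact (UniqueFactorizationMonoid.irreducible_iff_prime).mp (cyclotomic.irreducible hp.out.pos)

noncomputable def emb (ξ : ℂ) (hξ : IsPrimitiveRoot ξ p) : AdjoinRoot (cyclotomic p ℤ) →+* ℂ :=
  AdjoinRoot.lift (Int.castRingHom ℂ) ξ (by
    rw [Polynomial.eval₂_eq_eval_map, Polynomial.map_cyclotomic_int]
    exact hξ.isRoot_cyclotomic hp.out.pos)

noncomputable def red : AdjoinRoot (cyclotomic p ℤ) →+* ZMod p :=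
  AdjoinRoot.lift (Int.castRingHom (ZMod p)) 1 (by
    rw [Polynomial.eval₂_eq_eval_map, Polynomial.eval_one_map, Polynomial.eval_one_cyclotomic_prime]
    simp)

theorem emb_zet (ξ : ℂ) (hξ : IsPrimitiveRoot ξ p) : emb p ξ hξ (zet p) = ξ :=
  AdjoinRoot.lift_root _

theorem red_zet : red p (zet p) = 1 := AdjoinRoot.lift_root _

omit hp in theorem zet_pow_p : (zet p) ^ p = 1 := by
  have h : (AdjoinRoot.mk (cyclotomic p ℤ)) (X ^ p - 1) = 0 := by
    rw [AdjoinRoot.mk_eq_zero]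
    exact cyclotomic.dvd_X_pow_sub_one p ℤ
  rw [map_sub, map_pow, map_one, AdjoinRoot.mk_X, sub_eq_zero] at h
  exact h

/-- kernel of `red` is contained in the principal ideal `(ζ - 1)`. -/
theorem red_ker (x : AdjoinRoot (cyclotomic p ℤ)) (hx : red p x = 0) :
    ∃ y, x = (zet p - 1) * y := by
  obtain ⟨g, rfl⟩ := AdjoinRoot.mk_surjective x
  have hx' : ((g.eval 1 : ℤ) : ZMod p) = 0 := by
    rw [← hx]
    show _ = AdjoinRoot.lift (Int.castRingHom (ZMod p)) 1 _ _
    rw [AdjoinRoot.lift_mk, Polynomial.eval₂_eq_eval_map, Polynomial.eval_one_map]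
    rfl
  obtain ⟨t, ht⟩ := (ZMod.intCast_zmod_eq_zero_iff_dvd _ p).mp hx'
  obtain ⟨h, hh⟩ := Polynomial.X_sub_C_dvd_sub_C_eval (a := (1:ℤ)) (p := g)
  obtain ⟨u, hu⟩ := Polynomial.X_sub_C_dvd_sub_C_eval (a := (1:ℤ)) (p := cyclotomic p ℤ)
  rw [Polynomial.eval_one_cyclotomic_prime, Polynomial.C_1] at hu
  rw [Polynomial.C_1] at hh
  have hpR : ((p : ℤ) : AdjoinRoot (cyclotomic p ℤ)) + (zet p - 1) * AdjoinRoot.mk _ u = 0 := by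
    have h1 := congrArg (AdjoinRoot.mk (cyclotomic p ℤ)) hu
    rw [map_sub, AdjoinRoot.mk_self, map_mul, map_sub, AdjoinRoot.mk_X, map_one,
      AdjoinRoot.mk_C, eq_intCast] at h1
    rw [zet]
    linear_combination -h1
  have h2 := congrArg (AdjoinRoot.mk (cyclotomic p ℤ)) hh
  rw [map_sub, map_mul, map_sub, AdjoinRoot.mk_X, map_one, AdjoinRoot.mk_C, ht, eq_intCast] at h2
  refine ⟨AdjoinRoot.mk _ h - t • AdjoinRoot.mk _ u, ?_⟩
  rw [zsmul_eq_mul]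
  push_cast at h2
  simp only [zet] at hpR ⊢
  rw [Int.cast_natCast] at hpR
  linear_combination h2 + t * hpR

end Cheb
section Main

variable (p : ℕ) [hp : Fact p.Prime] (ξ : ℂ) (hξ : IsPrimitiveRoot ξ p)

include hξ

theorem emb_inj : Function.Injective (emb p ξ hξ) := by
  rw [injective_iff_map_eq_zero]
  intro x hx
  obtain ⟨g, rfl⟩ := AdjoinRoot.mk_surjective x
  rw [emb, AdjoinRoot.lift_mk] at hx
  have haev : Polynomial.aeval ξ g = 0 := by
    rw [Polynomial.aeval_def, ← hx]
    norm_cast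
  have hdvd : minpoly ℤ ξ ∣ g := minpoly.isIntegrallyClosed_dvd (hξ.isIntegral hp.out.pos) haev
  rw [← Polynomial.cyclotomic_eq_minpoly hξ hp.out.pos] at hdvd
  rw [AdjoinRoot.mk_eq_zero]
  exact hdvd
theorem zet_sub_one_ne_zero : zet p - 1 ≠ 0 := by
  intro h
  have := congrArg (emb p ξ hξ) h
  rw [map_sub, map_one, emb_zet, map_zero, sub_eq_zero] at this
  exact hξ.ne_one hp.out.one_lt this

theorem cheb_aux (n : ℕ) (a k : Fin n → ZMod p)
    (ha : Function.Injective a) (hk : Function.Injective k) :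
    ∀ (t : ℕ) (c : Fin n → AdjoinRoot (cyclotomic p ℤ)),
      (∀ j, ∑ i, c i * (zet p) ^ ((a i).val * (k j).val) = 0) →
      ∀ i, c i ∈ (Ideal.span {zet p - 1} : Ideal (AdjoinRoot (cyclotomic p ℤ))) ^ t := by
  intro t
  induction t with
  | zero => intro c _ i; simp
  | succ t IH =>
    intro c hc i
    -- the polynomial
    set f : Polynomial (AdjoinRoot (cyclotomic p ℤ)) :=
      ∑ i', C (c i') * X ^ (a i').val with hf
    have hvalinj : Function.Injective (fun i' : Fin n => (a i').val) :=
      fun i1 i2 h12 => ha (ZMod.val_injective p h12)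
    have hcoeff : ∀ i', f.coeff ((a i').val) = c i' := by
      intro i'
      rw [hf, Polynomial.finset_sum_coeff]
      simp only [Polynomial.coeff_C_mul, Polynomial.coeff_X_pow]
      rw [Finset.sum_eq_single i']
      · simp
      · intro b _ hb
        rw [if_neg (fun hcontra => hb (hvalinj hcontra).symm), mul_zero]
      · intro hmem; exact absurd (Finset.mem_univ i') hmem
    have hroot : ∀ j, f.IsRoot ((zet p) ^ (k j).val) := by
      intro j
      rw [Polynomial.IsRoot, hf, Polynomial.eval_finset_sum]
      simp only [Polynomial.eval_mul, Polynomial.eval_C, Polynomial.eval_pow, Polynomial.eval_X]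
      rw [← hc j]
      congr 1; funext i'
      rw [← pow_mul, mul_comm ((k j).val)]
    -- the set of roots
    set s : Finset (AdjoinRoot (cyclotomic p ℤ)) :=
      Finset.image (fun j => (zet p) ^ ((k j).val)) Finset.univ with hs
    have hzetinj : Function.Injective (fun j : Fin n => (zet p) ^ ((k j).val)) := by
      intro j1 j2 h12
      have := congrArg (emb p ξ hξ) h12
      rw [map_pow, map_pow, emb_zet] at this
      exact hk (ZMod.val_injective p
        (hξ.pow_inj (ZMod.val_lt _) (ZMod.val_lt _) this))
    have hscard : s.card = n := by
      rw [hs, Finset.card_image_of_injective _ hzetinj, Finset.card_univ, Fintype.card_fin]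
    obtain ⟨q, hq⟩ := prod_X_sub_C_dvd_of_roots s f (by
      intro x hx
      rw [hs, Finset.mem_image] at hx
      obtain ⟨j, _, rfl⟩ := hx
      exact hroot j)
    -- reduce mod (ζ - 1)
    have hmapdvd : ((X : Polynomial (ZMod p)) - 1) ^ n ∣ f.map (red p) := by
      refine ⟨q.map (red p), ?_⟩
      rw [hq, Polynomial.map_mul, Polynomial.map_prod]
      congr 1
      rw [← hscard, ← Finset.prod_const]
      refine Finset.prod_congr rfl ?_
      intro x hx
      rw [hs, Finset.mem_image] at hx
      obtain ⟨j, _, rfl⟩ := hx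
      rw [Polynomial.map_sub, Polynomial.map_X, Polynomial.map_C, map_pow, red_zet, one_pow,
        Polynomial.C_1]
    have hmapf : f.map (red p) = ∑ i', C (red p (c i')) * X ^ (a i').val := by
      rw [hf, Polynomial.map_sum]
      refine Finset.sum_congr rfl (fun i' _ => ?_)
      rw [Polynomial.map_mul, Polynomial.map_C, Polynomial.map_pow, Polynomial.map_X]
    have hsupp : (f.map (red p)).support ⊆ Finset.image (fun i' => (a i').val) Finset.univ := by
      intro b hb
      rw [Polynomial.mem_support_iff, hmapf, Polynomial.finset_sum_coeff] at hb
      by_contra hbmem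
      refine hb (Finset.sum_eq_zero (fun i' _ => ?_))
      rw [Polynomial.coeff_C_mul, Polynomial.coeff_X_pow, if_neg, mul_zero]
      intro hcontra
      exact hbmem (Finset.mem_image.mpr ⟨i', Finset.mem_univ i', hcontra.symm⟩)
    have hcard : (f.map (red p)).support.card ≤ n := by
      calc (f.map (red p)).support.card ≤ _ := Finset.card_le_card hsupp
        _ ≤ Finset.univ.card := Finset.card_image_le
        _ = n := by rw [Finset.card_univ, Fintype.card_fin]
    have hdeg : (f.map (red p)).natDegree < p := by
      rcases eq_or_ne (f.map (red p)) 0 with h0 | h0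
      · rw [h0, natDegree_zero]; exact hp.out.pos
      · have := hsupp (Polynomial.natDegree_mem_support_of_nonzero h0)
        rw [Finset.mem_image] at this
        obtain ⟨i', _, hi'⟩ := this
        rw [← hi']
        exact ZMod.val_lt _
    have hmap0 : f.map (red p) = 0 := frenkel p n _ hdeg hcard hmapdvd
    have hred0 : ∀ i', red p (c i') = 0 := by
      intro i'
      have : (f.map (red p)).coeff ((a i').val) = 0 := by rw [hmap0]; simp
      rwa [Polynomial.coeff_map, hcoeff] at this
    choose d hd using fun i' => red_ker p (c i') (hred0 i')
    have hdc : ∀ j, ∑ i', d i' * (zet p) ^ ((a i').val * (k j).val) = 0 := by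
      intro j
      have h1 : (zet p - 1) * ∑ i', d i' * (zet p) ^ ((a i').val * (k j).val) = 0 := by
        rw [Finset.mul_sum, ← hc j]
        refine Finset.sum_congr rfl (fun i' _ => ?_)
        rw [hd i']; ring
      rcases mul_eq_zero.mp h1 with h2 | h3
      · exact absurd h2 (zet_sub_one_ne_zero p ξ hξ)
      · exact h3
    have hdI := IH d hdc i
    rw [hd i, pow_succ']
    exact Ideal.mul_mem_mul (Ideal.subset_span (Set.mem_singleton _)) hdI

theorem cheb (n : ℕ) (a k : Fin n → ZMod p)
    (ha : Function.Injective a) (hk : Function.Injective k)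
    (c : Fin n → AdjoinRoot (cyclotomic p ℤ))
    (hc : ∀ j, ∑ i, c i * (zet p) ^ ((a i).val * (k j).val) = 0) :
    c = 0 := by
  have hI : (Ideal.span {zet p - 1} : Ideal (AdjoinRoot (cyclotomic p ℤ))) ≠ ⊤ := by
    intro h
    have h1 : (1 : AdjoinRoot (cyclotomic p ℤ)) ∈ Ideal.span {zet p - 1} := h ▸ Submodule.mem_top
    obtain ⟨y, hy⟩ := Ideal.mem_span_singleton.mp h1
    have := congrArg (red p) hy
    rw [map_one, map_mul, map_sub, red_zet, map_one, sub_self, zero_mul] at this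
    exact one_ne_zero this
  have hbot := Ideal.iInf_pow_eq_bot_of_isDomain (I := (Ideal.span {zet p - 1} : Ideal (AdjoinRoot (cyclotomic p ℤ)))) hI
  funext i
  have hmem : c i ∈ (⨅ t : ℕ, (Ideal.span {zet p - 1} : Ideal (AdjoinRoot (cyclotomic p ℤ))) ^ t) :=
    Submodule.mem_iInf _ |>.mpr (fun t => cheb_aux p ξ hξ n a k ha hk t c hc i)
  rw [hbot] at hmem
  simpa using hmem

end Main

section Assemble

/-- merging disjoint columns of a Vandermonde submatrix by addition
yields linearly independent vectors. -/
theorem stmt_16 (p : ℕ) [Fact p.Prime] (ξ : ℂ) (hξ : IsPrimitiveRoot ξ p)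
    (r : ℕ) (K : Finset (ZMod p)) (hK : K.card = r)
    (m : ℕ) (T : Fin m → Finset (ZMod p))
    (hdisj : ∀ i j : Fin m, i ≠ j → Disjoint (T i) (T j))
    (hne : ∀ j : Fin m, (T j).Nonempty)
    (hcard : (Finset.univ.biUnion T).card ≤ r) :
    LinearIndependent ℂ
      (fun j : Fin m => fun k : K => ∑ g ∈ T j, ξ ^ ((k : ZMod p) * g).val) := by
  classical
  have hp : Fact p.Prime := inferInstance
  rw [Fintype.linearIndependent_iff]
  intro γ hγ j0
  set A := Finset.univ.biUnion T with hA
  set n := A.card with hn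
  have hnK : n ≤ K.card := by rw [hK]; exact hcard
  obtain ⟨K', hK'sub, hK'card⟩ := Finset.exists_subset_card_eq hnK
  have eqA : {x // x ∈ A} ≃ Fin n := A.equivFin
  have eqK : {x // x ∈ K'} ≃ Fin n := Finset.equivFinOfCardEq hK'card
  set gfun : Fin n → ZMod p := fun i => ((eqA.symm i : {x // x ∈ A}) : ZMod p) with hgfun
  set kfun : Fin n → ZMod p := fun i => ((eqK.symm i : {x // x ∈ K'}) : ZMod p) with hkfun
  have hginj : Function.Injective gfun := fun i1 i2 h =>
    eqA.symm.injective (Subtype.val_injective h)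
  have hkinj : Function.Injective kfun := fun i1 i2 h =>
    eqK.symm.injective (Subtype.val_injective h)
  have hkmem : ∀ i, kfun i ∈ K := fun i => hK'sub (eqK.symm i).2
  -- power arithmetic
  have hxipow : ∀ s : ℕ, ξ ^ (s % p) = ξ ^ s := by
    intro s
    conv_rhs => rw [← Nat.div_add_mod s p]
    rw [pow_add, pow_mul, hξ.pow_eq_one, one_pow, one_mul]
  have hvalmul : ∀ x y : ZMod p, ξ ^ ((x * y).val) = ξ ^ (x.val * y.val) := by
    intro x y
    rw [ZMod.val_mul, hxipow]
  -- the merged coefficient function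
  set w : ZMod p → ℂ := fun g => ∑ j, if g ∈ T j then γ j else 0 with hwdef
  have hw : ∀ (j : Fin m) (g : ZMod p), g ∈ T j → w g = γ j := by
    intro j g hg
    show (∑ j' : Fin m, if g ∈ T j' then γ j' else 0) = γ j
    rw [Finset.sum_eq_single j]
    · rw [if_pos hg]
    · intro b _ hbj
      rw [if_neg (fun hgb => (Finset.disjoint_left.mp (hdisj b j hbj) hgb) hg)]
    · intro habs; exact absurd (Finset.mem_univ j) habs
  -- linear relation evaluated at each element of K
  have hγk : ∀ k, k ∈ K → ∑ j, γ j * ∑ g ∈ T j, ξ ^ ((k * g).val) = 0 := by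
    intro k hk
    have := congrFun hγ ⟨k, hk⟩
    simpa [Finset.sum_apply, smul_eq_mul] using this
  -- the square matrices
  set MR : Matrix (Fin n) (Fin n) (AdjoinRoot (cyclotomic p ℤ)) :=
    fun i i' => (zet p) ^ ((gfun i').val * (kfun i).val) with hMR
  have hdetR : MR.det ≠ 0 := by
    intro h0
    obtain ⟨v, hv0, hv⟩ := Matrix.exists_mulVec_eq_zero_iff.mpr h0
    refine hv0 (cheb p ξ hξ n gfun kfun hginj hkinj v (fun j => ?_))
    have := congrFun hv j
    simpa [hMR, Matrix.mulVec, dotProduct, mul_comm] using this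
  have hdetC : (MR.map (emb p ξ hξ)).det ≠ 0 := by
    rw [← RingHom.mapMatrix_apply, ← RingHom.map_det]
    intro h
    exact hdetR (emb_inj p ξ hξ (by rw [h, map_zero]))
  -- the complex kernel vector
  set c : Fin n → ℂ := fun i => w (gfun i) with hc
  -- it is in the kernel
  have hmvC : (MR.map (emb p ξ hξ)).mulVec c = 0 := by
    funext i
    have hentry : ∀ i', (MR.map (emb p ξ hξ)) i i' = ξ ^ ((kfun i * gfun i').val) := by
      intro i'
      rw [Matrix.map_apply, hMR, map_pow, emb_zet, hvalmul, mul_comm ((kfun i).val)]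
    have h1 : (MR.map (emb p ξ hξ)).mulVec c i
        = ∑ i', ξ ^ ((kfun i * gfun i').val) * w (gfun i') := by
      rw [Matrix.mulVec, dotProduct]
      exact Finset.sum_congr rfl (fun i' _ => by rw [hentry i', hc])
    have h2 : ∑ i', ξ ^ ((kfun i * gfun i').val) * w (gfun i')
        = ∑ g ∈ A, ξ ^ ((kfun i * g).val) * w g := by
      rw [← Finset.sum_coe_sort A (fun g => ξ ^ ((kfun i * g).val) * w g)]
      refine (Fintype.sum_equiv eqA _ _ (fun x => ?_)).symm
      have hx : gfun (eqA x) = (x : ZMod p) := by rw [hgfun]; simp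
      rw [hx]
    have h3 : ∑ g ∈ A, ξ ^ ((kfun i * g).val) * w g
        = ∑ j, γ j * ∑ g ∈ T j, ξ ^ ((kfun i * g).val) := by
      rw [hA, Finset.sum_biUnion (fun a _ b _ hab => hdisj a b hab)]
      refine Finset.sum_congr rfl (fun j _ => ?_)
      rw [Finset.mul_sum]
      refine Finset.sum_congr rfl (fun g hg => ?_)
      rw [hw j g hg]; ring
    show (MR.map (emb p ξ hξ)).mulVec c i = 0
    rw [h1, h2, h3, hγk _ (hkmem i)]
  have hc0 : c = 0 := by
    by_contra hcne
    exact hdetC (Matrix.exists_mulVec_eq_zero_iff.mp ⟨c, hcne, hmvC⟩)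
  -- conclude
  obtain ⟨g0, hg0⟩ := hne j0
  have hg0A : g0 ∈ A := Finset.mem_biUnion.mpr ⟨j0, Finset.mem_univ j0, hg0⟩
  have h5 : gfun (eqA ⟨g0, hg0A⟩) = g0 := by rw [hgfun]; simp
  have h6 : c (eqA ⟨g0, hg0A⟩) = γ j0 := by
    show w (gfun (eqA ⟨g0, hg0A⟩)) = γ j0
    rw [h5]
    exact hw j0 g0 hg0
  rw [hc0] at h6
  exact h6.symm.trans (Pi.zero_apply _)

end Assemble
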